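/- arXiv:2401.14644 — 2 statements merged into one kernel-verified Lean document; each statement's English description precedes it below -/
import Mathlib

section
/- The set L of 2n×2n matrices over K which, written in four n×n blocks (a b; c d), satisfy a, c ∈ K𝒫, b ∈ K₀¹𝒫 and d ∈ K¹𝒫, is a unital K-subalgebra of Mat_{2n}(K), and dim_K L = 1 + 2n + 4·|{(i,j) : i ≺ j in 𝒫}|. -/
open Matrix

/-- A finite poset structure on `{1,…,n}` (modeled as `Fin n`) whose order
relation refines the natural linear order. -/
structure PosetOn (n : ℕ) where
  le : Fin n → Fin n → Prop
  le_refl : ∀ i, le i i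
  le_trans : ∀ {i j k : Fin n}, le i j → le j k → le i k
  le_compat : ∀ {i j : Fin n}, le i j → i ≤ j

/-- The strict order `i ≺ j`. -/
def PosetOn.lt {n : ℕ} (P : PosetOn n) (i j : Fin n) : Prop := P.le i j ∧ i ≠ j

/-- The incidence algebra `K𝒫` as a set of `n × n` matrices. -/
def KPset (K : Type) [Field K] {n : ℕ} (P : PosetOn n) : Set (Matrix (Fin n) (Fin n) K) :=
  {M | ∀ j i, M j i ≠ 0 → P.le i j}

/-- The row-balanced incidence algebra `K¹𝒫`. -/
def KPoneSet (K : Type) [Field K] {n : ℕ} (P : PosetOn n) : Set (Matrix (Fin n) (Fin n) K) :=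
  {M | M ∈ KPset K P ∧ ∃ c : K, M *ᵥ (fun _ => 1) = fun _ => c}

/-- The row-centralized subspace `K₀¹𝒫`. -/
def KP0Set (K : Type) [Field K] {n : ℕ} (P : PosetOn n) : Set (Matrix (Fin n) (Fin n) K) :=
  {M | M ∈ KPset K P ∧ M *ᵥ (fun _ => 1) = 0}

/-- The matrix model of the left Burt–Butler algebra: `2n × 2n` matrices (indexed by
`Fin n ⊕ Fin n`) with blocks `(a b; c d)`, `a, c ∈ K𝒫`, `b ∈ K₀¹𝒫`, `d ∈ K¹𝒫`. -/
def LSet (K : Type) [Field K] {n : ℕ} (P : PosetOn n) :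
    Set (Matrix (Fin n ⊕ Fin n) (Fin n ⊕ Fin n) K) :=
  {X | X.toBlocks₁₁ ∈ KPset K P ∧ X.toBlocks₁₂ ∈ KP0Set K P ∧
       X.toBlocks₂₁ ∈ KPset K P ∧ X.toBlocks₂₂ ∈ KPoneSet K P}

section Aux

variable {K : Type} [Field K] {n : ℕ} {P : PosetOn n}

lemma KP_zero : (0 : Matrix (Fin n) (Fin n) K) ∈ KPset K P :=
  fun _ _ h => absurd rfl h

lemma KP_one : (1 : Matrix (Fin n) (Fin n) K) ∈ KPset K P := by
  intro j i h
  by_cases hij : j = i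
  · subst hij; exact P.le_refl j
  · exact absurd (Matrix.one_apply_ne hij) h

lemma KP_add {M N : Matrix (Fin n) (Fin n) K} (hM : M ∈ KPset K P) (hN : N ∈ KPset K P) :
    M + N ∈ KPset K P := by
  intro j i h
  by_cases hM0 : M j i = 0
  · exact hN j i (by simpa [Matrix.add_apply, hM0] using h)
  · exact hM j i hM0

lemma KP_smul {M : Matrix (Fin n) (Fin n) K} (c : K) (hM : M ∈ KPset K P) :
    c • M ∈ KPset K P := by
  intro j i h
  apply hM j i
  intro h0
  exact h (by simp [Matrix.smul_apply, h0])

lemma KP_mul {M N : Matrix (Fin n) (Fin n) K} (hM : M ∈ KPset K P) (hN : N ∈ KPset K P) :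
    M * N ∈ KPset K P := by
  intro j i h
  rw [Matrix.mul_apply] at h
  obtain ⟨k, _, hk⟩ := Finset.exists_ne_zero_of_sum_ne_zero h
  exact P.le_trans (hN k i (fun h0 => hk (by simp [h0]))) (hM j k (fun h0 => hk (by simp [h0])))

open scoped Classical

lemma mulVec_const (M : Matrix (Fin n) (Fin n) K) (c : K) :
    M *ᵥ (fun _ => c) = c • (M *ᵥ fun _ => 1) := by
  have : (fun _ : Fin n => c) = c • (fun _ : Fin n => (1 : K)) := by
    funext i; simp
  rw [this, Matrix.mulVec_smul]

lemma mul_blocks (X Y : Matrix (Fin n ⊕ Fin n) (Fin n ⊕ Fin n) K) :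
    X * Y = Matrix.fromBlocks
      (X.toBlocks₁₁ * Y.toBlocks₁₁ + X.toBlocks₁₂ * Y.toBlocks₂₁)
      (X.toBlocks₁₁ * Y.toBlocks₁₂ + X.toBlocks₁₂ * Y.toBlocks₂₂)
      (X.toBlocks₂₁ * Y.toBlocks₁₁ + X.toBlocks₂₂ * Y.toBlocks₂₁)
      (X.toBlocks₂₁ * Y.toBlocks₁₂ + X.toBlocks₂₂ * Y.toBlocks₂₂) := by
  conv_lhs => rw [← Matrix.fromBlocks_toBlocks X, ← Matrix.fromBlocks_toBlocks Y]
  rw [Matrix.fromBlocks_multiply]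

/-- coordinate evaluation as a linear map -/
def entryL (s t : Fin n ⊕ Fin n) : Matrix (Fin n ⊕ Fin n) (Fin n ⊕ Fin n) K →ₗ[K] K where
  toFun X := X s t
  map_add' _ _ := rfl
  map_smul' _ _ := rfl

def emb {n : ℕ} : Fin 2 → Fin n → Fin n ⊕ Fin n := ![Sum.inl, Sum.inr]

variable (P) in
/-- the coordinate linear map -/
noncomputable def psi (i0 : Fin n) :
    Matrix (Fin n ⊕ Fin n) (Fin n ⊕ Fin n) K →ₗ[K]
      K × ((Fin n ⊕ Fin n) → K) ×
        ((Fin 2 × Fin 2 × {q : Fin n × Fin n // P.lt q.1 q.2}) → K) :=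
  (∑ i, entryL (Sum.inr i0) (Sum.inr i)).prod
    ((LinearMap.pi fun s =>
        Sum.elim (fun i => entryL (Sum.inl i) (Sum.inl i))
          (fun i => entryL (Sum.inr i) (Sum.inl i)) s).prod
      (LinearMap.pi fun kq => entryL (emb kq.1 kq.2.2.1.2) (emb kq.2.1 kq.2.2.1.1)))

lemma psi_apply (i0 : Fin n) (X : Matrix (Fin n ⊕ Fin n) (Fin n ⊕ Fin n) K) :
    psi P i0 X =
      (∑ i, X (Sum.inr i0) (Sum.inr i),
       fun s => Sum.elim (fun i => X (Sum.inl i) (Sum.inl i))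
          (fun i => X (Sum.inr i) (Sum.inl i)) s,
       fun kq => X (emb kq.1 kq.2.2.1.2) (emb kq.2.1 kq.2.2.1.1)) := by
  refine Prod.ext ?_ (Prod.ext ?_ ?_)
  · simp [psi, entryL, LinearMap.sum_apply]; rfl
  · funext s
    cases s <;> simp [psi, entryL] <;> rfl
  · funext kq
    simp [psi, entryL]; rfl

lemma psi_eq_zero {i0 : Fin n} {X : Matrix (Fin n ⊕ Fin n) (Fin n ⊕ Fin n) K}
    (hX : X ∈ LSet K P) (h : psi P i0 X = 0) : X = 0 := by
  classical
  rw [psi_apply] at h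
  have h1 : ∑ i, X (Sum.inr i0) (Sum.inr i) = 0 := congrArg Prod.fst h
  have h2 := congrArg (fun p => p.2.1) h
  have h3 := congrArg (fun p => p.2.2) h
  simp only [Prod.snd_zero, Prod.fst_zero] at h2 h3
  have hdiagA : ∀ i, X (Sum.inl i) (Sum.inl i) = 0 := fun i => congrFun h2 (Sum.inl i)
  have hdiagC : ∀ i, X (Sum.inr i) (Sum.inl i) = 0 := fun i => congrFun h2 (Sum.inr i)
  have hstrict : ∀ (k l : Fin 2) (i j : Fin n), P.lt i j → X (emb k j) (emb l i) = 0 :=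
    fun k l i j hij => congrFun h3 (k, l, ⟨(i, j), hij⟩)
  obtain ⟨ha, ⟨hbP, hb0⟩, hc, hdP, cD, hcD⟩ := hX
  -- off-diagonal entries of all blocks vanish
  have hoff : ∀ (k l : Fin 2) (j i : Fin n), i ≠ j → X (emb k j) (emb l i) = 0 := by
    intro k l j i hij
    by_cases hle : P.le i j
    · exact hstrict k l i j ⟨hle, hij⟩
    · by_contra hne
      fin_cases k <;> fin_cases l <;>
        simp only [emb, Matrix.cons_val_zero, Matrix.cons_val_one, Matrix.head_cons] at hne
      · exact hle (ha j i hne)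
      · exact hle (hbP j i hne)
      · exact hle (hc j i hne)
      · exact hle (hdP j i hne)
  have hoff' : ∀ (k l : Fin 2) (j i : Fin n), i ≠ j → X (emb k j) (emb l i) = 0 := hoff
  -- diagonal of B
  have hdiagB : ∀ j, X (Sum.inl j) (Sum.inr j) = 0 := by
    intro j
    have hrow : ∑ i, X (Sum.inl j) (Sum.inr i) = 0 := by
      have := congrFun hb0 j
      simpa [Matrix.mulVec, dotProduct, Matrix.toBlocks₁₂] using this
    rw [← hrow]
    symm
    apply Finset.sum_eq_single_of_mem j (Finset.mem_univ j)
    intro i _ hij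
    exact hoff 0 1 j i hij
  -- the constant of D is 0
  have hcD0 : cD = 0 := by
    have := congrFun hcD i0
    simp only [Matrix.mulVec, dotProduct, Matrix.toBlocks₂₂, Matrix.of_apply,
      mul_one] at this
    rw [← this, h1]
  have hdiagD : ∀ j, X (Sum.inr j) (Sum.inr j) = 0 := by
    intro j
    have hrow : ∑ i, X (Sum.inr j) (Sum.inr i) = 0 := by
      have := congrFun hcD j
      simp only [Matrix.mulVec, dotProduct, Matrix.toBlocks₂₂, Matrix.of_apply,
        mul_one] at this
      rw [this, hcD0]
    rw [← hrow]
    symm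
    apply Finset.sum_eq_single_of_mem j (Finset.mem_univ j)
    intro i _ hij
    exact hoff 1 1 j i hij
  ext s t
  rcases s with j | j <;> rcases t with i | i <;> rcases eq_or_ne i j with rfl | hij
  · simpa using hdiagA i
  · simpa [emb] using hoff 0 0 j i hij
  · simpa using hdiagB i
  · simpa [emb] using hoff 0 1 j i hij
  · simpa using hdiagC i
  · simpa [emb] using hoff 1 0 j i hij
  · simpa using hdiagD i
  · simpa [emb] using hoff 1 1 j i hij

variable (P) in
/-- building a block with prescribed strict entries and diagonal -/
noncomputable def bld (w : {q : Fin n × Fin n // P.lt q.1 q.2} → K) (g : Fin n → K) :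
    Matrix (Fin n) (Fin n) K :=
  Matrix.of fun j i => if h : P.lt i j then w ⟨(i, j), h⟩ else if i = j then g i else 0

lemma bld_mem_KP (w : {q : Fin n × Fin n // P.lt q.1 q.2} → K) (g : Fin n → K) :
    bld P w g ∈ KPset K P := by
  classical
  intro j i h
  simp only [bld, Matrix.of_apply] at h
  by_cases hlt : P.lt i j
  · exact hlt.1
  · rw [dif_neg hlt] at h
    by_cases hij : i = j
    · subst hij; exact P.le_refl i
    · simp [hij] at h

lemma bld_apply_pointwise (w : {q : Fin n × Fin n // P.lt q.1 q.2} → K) (g : Fin n → K)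
    (j i : Fin n) :
    bld P w g j i = (if h : P.lt i j then w ⟨(i, j), h⟩ else 0) +
      (if i = j then g i else 0) := by
  classical
  simp only [bld, Matrix.of_apply]
  by_cases hlt : P.lt i j
  · rw [dif_pos hlt, dif_pos hlt, if_neg hlt.2, add_zero]
  · rw [dif_neg hlt, dif_neg hlt, zero_add]

lemma bld_rowsum (w : {q : Fin n × Fin n // P.lt q.1 q.2} → K) (g : Fin n → K) (j : Fin n) :
    ∑ i, bld P w g j i = g j + ∑ i, (if h : P.lt i j then w ⟨(i, j), h⟩ else 0) := by
  classical
  simp only [bld_apply_pointwise, Finset.sum_add_distrib]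
  rw [Finset.sum_ite_eq' Finset.univ j g, if_pos (Finset.mem_univ j), add_comm]

lemma bld_mulVec_one (w : {q : Fin n × Fin n // P.lt q.1 q.2} → K) (g : Fin n → K) (j : Fin n) :
    (bld P w g *ᵥ fun _ => 1) j = g j + ∑ i, (if h : P.lt i j then w ⟨(i, j), h⟩ else 0) := by
  classical
  simp only [Matrix.mulVec, dotProduct, mul_one]
  exact bld_rowsum w g j

end Aux

open scoped Classical in
/-- the subalgebra with carrier `LSet K P` -/
def LSub (K : Type) [Field K] {n : ℕ} (P : PosetOn n) :
    Subalgebra K (Matrix (Fin n ⊕ Fin n) (Fin n ⊕ Fin n) K) :=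
    { carrier := LSet K P
      add_mem' := by
        rintro X Y ⟨ha, ⟨hbP, hb0⟩, hc, hdP, cX, hcX⟩ ⟨ha', ⟨hbP', hb0'⟩, hc', hdP', cY, hcY⟩
        have hadd : ∀ f : Matrix (Fin n ⊕ Fin n) (Fin n ⊕ Fin n) K →
            Matrix (Fin n) (Fin n) K, True := fun _ => trivial
        refine ⟨?_, ⟨?_, ?_⟩, ?_, ?_, cX + cY, ?_⟩
        · exact KP_add ha ha'
        · exact KP_add hbP hbP'
        · show (X + Y).toBlocks₁₂ *ᵥ (fun _ => 1) = 0
          have : (X + Y).toBlocks₁₂ = X.toBlocks₁₂ + Y.toBlocks₁₂ := rfl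
          rw [this, Matrix.add_mulVec, hb0, hb0', add_zero]
        · exact KP_add hc hc'
        · exact KP_add hdP hdP'
        · show (X + Y).toBlocks₂₂ *ᵥ (fun _ => 1) = _
          have : (X + Y).toBlocks₂₂ = X.toBlocks₂₂ + Y.toBlocks₂₂ := rfl
          rw [this, Matrix.add_mulVec, hcX, hcY]
          rfl
      mul_mem' := by
        rintro X Y ⟨ha, ⟨hbP, hb0⟩, hc, hdP, cX, hcX⟩ ⟨ha', ⟨hbP', hb0'⟩, hc', hdP', cY, hcY⟩
        simp only [LSet, Set.mem_setOf_eq, mul_blocks X Y, Matrix.toBlocks_fromBlocks₁₁,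
          Matrix.toBlocks_fromBlocks₁₂, Matrix.toBlocks_fromBlocks₂₁,
          Matrix.toBlocks_fromBlocks₂₂]
        refine ⟨KP_add (KP_mul ha ha') (KP_mul hbP hc'),
          ⟨KP_add (KP_mul ha hbP') (KP_mul hbP hdP'), ?_⟩,
          KP_add (KP_mul hc ha') (KP_mul hdP hc'),
          KP_add (KP_mul hc hbP') (KP_mul hdP hdP'), cX * cY, ?_⟩
        · rw [Matrix.add_mulVec, ← Matrix.mulVec_mulVec, ← Matrix.mulVec_mulVec,
            hb0', hcY, Matrix.mulVec_zero, mulVec_const, hb0, smul_zero, add_zero]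
        · rw [Matrix.add_mulVec, ← Matrix.mulVec_mulVec, ← Matrix.mulVec_mulVec,
            hb0', hcY, Matrix.mulVec_zero, mulVec_const, hcX, zero_add]
          funext j
          simp [mul_comm]
      one_mem' := by
        refine ⟨?_, ⟨?_, ?_⟩, ?_, ?_, 1, ?_⟩
        · intro j i h
          simp only [Matrix.toBlocks₁₁, Matrix.of_apply, Matrix.one_apply] at h
          by_cases hij : j = i
          · subst hij; exact P.le_refl j
          · simp [hij] at h
        · intro j i h
          simp only [Matrix.toBlocks₁₂, Matrix.of_apply, Matrix.one_apply] at h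
          simp at h
        · funext j
          simp [Matrix.mulVec, dotProduct, Matrix.toBlocks₁₂, Matrix.one_apply]
        · intro j i h
          simp only [Matrix.toBlocks₂₁, Matrix.of_apply, Matrix.one_apply] at h
          simp at h
        · intro j i h
          simp only [Matrix.toBlocks₂₂, Matrix.of_apply, Matrix.one_apply] at h
          by_cases hij : j = i
          · subst hij; exact P.le_refl j
          · simp [hij] at h
        · funext j
          simp [Matrix.mulVec, dotProduct, Matrix.toBlocks₂₂, Matrix.one_apply]
      zero_mem' := by
        refine ⟨KP_zero, ⟨KP_zero, ?_⟩, KP_zero, KP_zero, 0, ?_⟩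
        · show (0 : Matrix _ _ K).toBlocks₁₂ *ᵥ _ = 0
          have : (0 : Matrix (Fin n ⊕ Fin n) (Fin n ⊕ Fin n) K).toBlocks₁₂ = 0 := rfl
          rw [this, Matrix.zero_mulVec]
        · have : (0 : Matrix (Fin n ⊕ Fin n) (Fin n ⊕ Fin n) K).toBlocks₂₂ = 0 := rfl
          rw [this, Matrix.zero_mulVec]
          rfl
      algebraMap_mem' := by
        intro r
        refine ⟨?_, ⟨?_, ?_⟩, ?_, ?_, r, ?_⟩
        · intro j i h
          simp only [Matrix.toBlocks₁₁, Matrix.of_apply, Matrix.algebraMap_matrix_apply] at h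
          by_cases hij : j = i
          · subst hij; exact P.le_refl j
          · simp [hij] at h
        · intro j i h
          simp only [Matrix.toBlocks₁₂, Matrix.of_apply, Matrix.algebraMap_matrix_apply] at h
          simp at h
        · funext j
          simp [Matrix.mulVec, dotProduct, Matrix.toBlocks₁₂,
            Matrix.algebraMap_matrix_apply]
        · intro j i h
          simp only [Matrix.toBlocks₂₁, Matrix.of_apply, Matrix.algebraMap_matrix_apply] at h
          simp at h
        · intro j i h
          simp only [Matrix.toBlocks₂₂, Matrix.of_apply, Matrix.algebraMap_matrix_apply] at h
          by_cases hij : j = i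
          · subst hij; exact P.le_refl j
          · simp [hij] at h
        · funext j
          simp [Matrix.mulVec, dotProduct, Matrix.toBlocks₂₂,
            Matrix.algebraMap_matrix_apply, Finset.sum_ite_eq] }

set_option synthInstance.maxHeartbeats 1000000
set_option maxHeartbeats 2000000

/-- `L` is a unital `K`-subalgebra of `Mat_{2n}(K)` of dimension
`1 + 2n + 4·|{(i,j) : i ≺ j}|`. -/
theorem stmt5 (K : Type) [Field K] (n : ℕ) (hn : 1 ≤ n) (P : PosetOn n) :
    ∃ S : Subalgebra K (Matrix (Fin n ⊕ Fin n) (Fin n ⊕ Fin n) K),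
      (S : Set (Matrix (Fin n ⊕ Fin n) (Fin n ⊕ Fin n) K)) = LSet K P ∧
      Module.finrank K S = 1 + 2 * n + 4 * Nat.card {q : Fin n × Fin n // P.lt q.1 q.2} := by
  classical
  set S := LSub K P with hSdef
  refine ⟨S, rfl, ?_⟩
  haveI : Fintype {q : Fin n × Fin n // P.lt q.1 q.2} := Fintype.ofFinite _
  let i0 : Fin n := ⟨0, hn⟩
  let f : S →ₗ[K] K × ((Fin n ⊕ Fin n) → K) ×
      ((Fin 2 × Fin 2 × {q : Fin n × Fin n // P.lt q.1 q.2}) → K) :=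
    (psi P i0).comp S.val.toLinearMap
  have hf : ∀ x : S, f x = psi P i0 (x : Matrix (Fin n ⊕ Fin n) (Fin n ⊕ Fin n) K) :=
    fun _ => rfl
  have hinj : Function.Injective f := by
    intro x y hxy
    have hmem : ((x : Matrix (Fin n ⊕ Fin n) (Fin n ⊕ Fin n) K) -
        (y : Matrix (Fin n ⊕ Fin n) (Fin n ⊕ Fin n) K)) ∈ LSet K P := by
      have := S.sub_mem x.2 y.2
      exact this
    have h0 : psi P i0 ((x : Matrix (Fin n ⊕ Fin n) (Fin n ⊕ Fin n) K) -
        (y : Matrix (Fin n ⊕ Fin n) (Fin n ⊕ Fin n) K)) = 0 := by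
      rw [map_sub, ← hf x, ← hf y, hxy, sub_self]
    exact Subtype.ext (sub_eq_zero.mp (psi_eq_zero hmem h0))
  have hsurj : Function.Surjective f := by
    rintro ⟨t, u, v⟩
    have hmem : Matrix.fromBlocks
        (bld P (fun q => v (0, 0, q)) (fun i => u (Sum.inl i)))
        (bld P (fun q => v (0, 1, q))
          (fun j => -(∑ i, if h : P.lt i j then v (0, 1, ⟨(i, j), h⟩) else 0)))
        (bld P (fun q => v (1, 0, q)) (fun i => u (Sum.inr i)))
        (bld P (fun q => v (1, 1, q))
          (fun j => t - (∑ i, if h : P.lt i j then v (1, 1, ⟨(i, j), h⟩) else 0)))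
        ∈ LSet K P := by
      refine ⟨?_, ⟨?_, ?_⟩, ?_, ?_, t, ?_⟩
      · rw [Matrix.toBlocks_fromBlocks₁₁]; exact bld_mem_KP _ _
      · rw [Matrix.toBlocks_fromBlocks₁₂]; exact bld_mem_KP _ _
      · rw [Matrix.toBlocks_fromBlocks₁₂]
        funext j
        rw [bld_mulVec_one]
        simp
      · rw [Matrix.toBlocks_fromBlocks₂₁]; exact bld_mem_KP _ _
      · rw [Matrix.toBlocks_fromBlocks₂₂]; exact bld_mem_KP _ _
      · rw [Matrix.toBlocks_fromBlocks₂₂]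
        funext j
        rw [bld_mulVec_one]
        simp
    suffices hgoal : psi P i0 (Matrix.fromBlocks
        (bld P (fun q => v (0, 0, q)) (fun i => u (Sum.inl i)))
        (bld P (fun q => v (0, 1, q))
          (fun j => -(∑ i, if h : P.lt i j then v (0, 1, ⟨(i, j), h⟩) else 0)))
        (bld P (fun q => v (1, 0, q)) (fun i => u (Sum.inr i)))
        (bld P (fun q => v (1, 1, q))
          (fun j => t - (∑ i, if h : P.lt i j then v (1, 1, ⟨(i, j), h⟩) else 0)))) =
        (t, u, v) by
      exact ⟨⟨_, hmem⟩, hgoal⟩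
    rw [psi_apply, Prod.mk.injEq, Prod.mk.injEq]
    refine ⟨?_, ?_, ?_⟩
    · simp only [Matrix.fromBlocks_apply₂₂]
      rw [bld_rowsum]
      simp
    · funext s
      have hlt : ∀ i : Fin n, ¬ P.lt i i := fun i h => h.2 rfl
      cases s with
      | inl i => simp [bld, hlt i]
      | inr i => simp [bld, hlt i]
    · funext kq
      obtain ⟨k, l, ⟨⟨i, j⟩, h⟩⟩ := kq
      fin_cases k <;> fin_cases l <;>
        simp [emb, bld, h]
  rw [LinearEquiv.finrank_eq (LinearEquiv.ofBijective f ⟨hinj, hsurj⟩)]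
  rw [Module.finrank_prod, Module.finrank_prod, Module.finrank_self,
    Module.finrank_fintype_fun_eq_card, Module.finrank_fintype_fun_eq_card,
    Nat.card_eq_fintype_card]
  simp [Fintype.card_sum, Fintype.card_prod]
  ring
end

section
/- For every k ∈ 𝒫, the subspace I₀·D(I_k L) of the left L-module D(I_k L) is contained in the L-submodule generated by I_E·D(I_k L), i.e. I₀·D(I_k L) ⊆ span_K{x·φ : x ∈ L, φ ∈ I_E·D(I_k L)}. -/
open Matrix

set_option synthInstance.maxHeartbeats 1000000
set_option maxHeartbeats 2000000

variable {K : Type} [Field K] {n : ℕ}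
variable {L : Subalgebra K (Matrix (Fin n ⊕ Fin n) (Fin n ⊕ Fin n) K)}

lemma std_mul_apply (k : Fin n) (a : Matrix (Fin n) (Fin n) K) (i j : Fin n) :
    (Matrix.single k k (1:K) * a) i j = if i = k then a k j else 0 := by
  simp [Matrix.mul_apply, Matrix.single, ite_and, eq_comm]

lemma zero_mem_KP (P : PosetOn n) : (0 : Matrix (Fin n) (Fin n) K) ∈ KPset K P :=
  fun j i h => absurd rfl h

lemma one_mem_KP (P : PosetOn n) : (1 : Matrix (Fin n) (Fin n) K) ∈ KPset K P := by
  intro j i h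
  by_cases hij : i = j
  · subst hij; exact P.le_refl i
  · exact absurd (Matrix.one_apply_ne (Ne.symm hij)) h

lemma zero_mem_KPone (P : PosetOn n) : (0 : Matrix (Fin n) (Fin n) K) ∈ KPoneSet K P := by
  refine ⟨zero_mem_KP P, 0, ?_⟩
  funext i
  simp [Matrix.mulVec]

lemma zero_mem_KP0 (P : PosetOn n) : (0 : Matrix (Fin n) (Fin n) K) ∈ KP0Set K P := by
  refine ⟨zero_mem_KP P, ?_⟩
  funext i
  simp [Matrix.mulVec]

/-- `π a = a - diagonal(row sums)`. -/
def piMap (a : Matrix (Fin n) (Fin n) K) : Matrix (Fin n) (Fin n) K :=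
  a - Matrix.diagonal (fun i => ∑ j, a i j)

lemma piMap_add (a b : Matrix (Fin n) (Fin n) K) : piMap (a + b) = piMap a + piMap b := by
  unfold piMap
  have h : (fun i => ∑ j, (a + b) i j) = fun i => (∑ j, a i j) + (∑ j, b i j) := by
    funext i
    simpa using Finset.sum_add_distrib
  rw [h, ← Matrix.diagonal_add]
  abel

lemma piMap_smul (c : K) (a : Matrix (Fin n) (Fin n) K) : piMap (c • a) = c • piMap a := by
  unfold piMap
  have h : (fun i => ∑ j, (c • a) i j) = c • fun i => ∑ j, a i j := by
    funext i
    simpa using (Finset.mul_sum Finset.univ (fun j => a i j) c).symm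
  rw [h, Matrix.diagonal_smul, smul_sub]

lemma piMap_rowsum (a : Matrix (Fin n) (Fin n) K) :
    piMap a *ᵥ (fun _ => (1:K)) = 0 := by
  funext i
  simp [piMap, Matrix.mulVec, dotProduct, Matrix.diagonal, Finset.sum_sub_distrib,
    Finset.sum_ite_eq]

lemma piMap_mem_KP (P : PosetOn n) {a : Matrix (Fin n) (Fin n) K} (ha : a ∈ KPset K P) :
    piMap a ∈ KPset K P := by
  intro j i h
  by_cases hij : i = j
  · subst hij; exact P.le_refl i
  · apply ha j i
    intro h0
    apply h
    simp [piMap, Matrix.diagonal, h0, Ne.symm hij]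

lemma piMap_eq_self {b : Matrix (Fin n) (Fin n) K} (hb : b *ᵥ (fun _ => 1) = 0) :
    piMap b = b := by
  have h : ∀ i, ∑ j, b i j = 0 := by
    intro i
    have := congrFun hb i
    simpa [Matrix.mulVec, dotProduct] using this
  unfold piMap
  ext i j
  simp [Matrix.diagonal, h]

/-- The key auxiliary linear operation on `2n × 2n` matrices. -/
def Smap (M : Matrix (Fin n ⊕ Fin n) (Fin n ⊕ Fin n) K) :
    Matrix (Fin n ⊕ Fin n) (Fin n ⊕ Fin n) K :=
  fromBlocks 0 (piMap M.toBlocks₁₁) 0 0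

lemma Smap_add (M N : Matrix (Fin n ⊕ Fin n) (Fin n ⊕ Fin n) K) :
    Smap (M + N) = Smap M + Smap N := by
  unfold Smap
  have h : (M + N).toBlocks₁₁ = M.toBlocks₁₁ + N.toBlocks₁₁ := rfl
  rw [h, piMap_add]
  ext (i|i) (j|j) <;> simp [fromBlocks]

lemma Smap_smul (c : K) (M : Matrix (Fin n ⊕ Fin n) (Fin n ⊕ Fin n) K) :
    Smap (c • M) = c • Smap M := by
  unfold Smap
  have h : (c • M).toBlocks₁₁ = c • M.toBlocks₁₁ := rfl
  rw [h, piMap_smul]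
  ext (i|i) (j|j) <;> simp [fromBlocks]

lemma Smap_mem_LSet (P : PosetOn n) {M : Matrix (Fin n ⊕ Fin n) (Fin n ⊕ Fin n) K}
    (hM : M ∈ LSet K P) : Smap M ∈ LSet K P := by
  refine ⟨?_, ⟨?_, ?_⟩, ?_, ?_⟩
  · show (Smap M).toBlocks₁₁ ∈ KPset K P
    have h : (Smap M).toBlocks₁₁ = 0 := by simp [Smap]
    rw [h]; exact zero_mem_KP P
  · show (Smap M).toBlocks₁₂ ∈ KPset K P
    have h : (Smap M).toBlocks₁₂ = piMap M.toBlocks₁₁ := by simp [Smap]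
    rw [h]; exact piMap_mem_KP P hM.1
  · show (Smap M).toBlocks₁₂ *ᵥ (fun _ => 1) = 0
    have h : (Smap M).toBlocks₁₂ = piMap M.toBlocks₁₁ := by simp [Smap]
    rw [h]; exact piMap_rowsum M.toBlocks₁₁
  · show (Smap M).toBlocks₂₁ ∈ KPset K P
    have h : (Smap M).toBlocks₂₁ = 0 := by simp [Smap]
    rw [h]; exact zero_mem_KP P
  · show (Smap M).toBlocks₂₂ ∈ KPoneSet K P
    have h : (Smap M).toBlocks₂₂ = 0 := by simp [Smap]
    rw [h]; exact zero_mem_KPone P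

/-- Extract block equations from the corner condition. -/
lemma corner_blocks (k : Fin n) {M : Matrix (Fin n ⊕ Fin n) (Fin n ⊕ Fin n) K}
    (hM : fromBlocks (Matrix.single k k (1:K)) 0 0 0 * M = M) :
    Matrix.single k k (1:K) * M.toBlocks₁₁ = M.toBlocks₁₁ ∧
    Matrix.single k k (1:K) * M.toBlocks₁₂ = M.toBlocks₁₂ ∧
    M.toBlocks₂₁ = 0 ∧ M.toBlocks₂₂ = 0 := by
  have hdec : M = fromBlocks M.toBlocks₁₁ M.toBlocks₁₂ M.toBlocks₂₁ M.toBlocks₂₂ :=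
    (Matrix.fromBlocks_toBlocks M).symm
  have hM' := hM
  rw [hdec, Matrix.fromBlocks_multiply] at hM'
  rw [Matrix.fromBlocks_inj] at hM'
  obtain ⟨h1, h2, h3, h4⟩ := hM'
  refine ⟨?_, ?_, ?_, ?_⟩
  · simpa using h1
  · simpa using h2
  · have := h3; simp at this; exact this.symm
  · have := h4; simp at this; exact this.symm

lemma Ik_mul_Smap (k : Fin n) {M : Matrix (Fin n ⊕ Fin n) (Fin n ⊕ Fin n) K}
    (hM : fromBlocks (Matrix.single k k (1:K)) 0 0 0 * M = M) :
    fromBlocks (Matrix.single k k (1:K)) 0 0 0 * Smap M = Smap M := by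
  obtain ⟨hEa, -, -, -⟩ := corner_blocks k hM
  set a := M.toBlocks₁₁ with ha
  have hrow : ∀ i j, i ≠ k → a i j = 0 := by
    intro i j hik
    have h := congrFun (congrFun hEa i) j
    rw [std_mul_apply, if_neg hik] at h
    exact h.symm
  have hpi : Matrix.single k k (1:K) * piMap a = piMap a := by
    ext i j
    rw [std_mul_apply]
    by_cases hik : i = k
    · subst hik; simp
    · rw [if_neg hik]
      have h1 : a i j = 0 := hrow i j hik
      have h2 : ∀ l, a i l = 0 := fun l => hrow i l hik
      simp [piMap, Matrix.diagonal, h1, h2]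
  unfold Smap
  rw [Matrix.fromBlocks_multiply]
  rw [ha] at hpi
  simp [hpi]

/-- The key identity: for `M` in the corner with `M ∈ LSet`,
`M * I₀ = S (M * x₀ * I_E)` where `x₀ = fromBlocks 0 0 1 0`. -/
lemma key_eq (k : Fin n) {M : Matrix (Fin n ⊕ Fin n) (Fin n ⊕ Fin n) K}
    (hM : fromBlocks (Matrix.single k k (1:K)) 0 0 0 * M = M)
    (hb : M.toBlocks₁₂ *ᵥ (fun _ => 1) = 0) :
    M * fromBlocks 0 0 0 1 = Smap (M * fromBlocks 0 0 1 0 * fromBlocks 1 0 0 0) := by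
  obtain ⟨-, -, hc, hd⟩ := corner_blocks k hM
  have hdec : M = fromBlocks M.toBlocks₁₁ M.toBlocks₁₂ M.toBlocks₂₁ M.toBlocks₂₂ :=
    (Matrix.fromBlocks_toBlocks M).symm
  set a := M.toBlocks₁₁
  set b := M.toBlocks₁₂
  rw [hdec, hc, hd]
  rw [Matrix.fromBlocks_multiply, Matrix.fromBlocks_multiply, Matrix.fromBlocks_multiply]
  unfold Smap
  simp only [Matrix.mul_zero, Matrix.zero_mul, Matrix.mul_one, Matrix.one_mul, add_zero,
    zero_add, Matrix.toBlocks_fromBlocks₁₁]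
  rw [piMap_eq_self hb]

/-- The right ideal `I_k L = {u ∈ L : I_k u = u}` as a `K`-subspace of `L`. -/
def cornerRight (Ik : L) : Submodule K L where
  carrier := {u | Ik * u = u}
  add_mem' := by
    intro a b ha hb
    show Ik * (a + b) = a + b
    rw [mul_add, ha, hb]
  zero_mem' := mul_zero _
  smul_mem' := by
    intro c u hu
    show Ik * (c • u) = c • u
    rw [mul_smul_comm, hu]

/-- Right multiplication by `x ∈ L` on `I_k L`, as a `K`-linear map. -/
def rmulCorner (Ik : L) (x : L) : ↥(cornerRight Ik) →ₗ[K] ↥(cornerRight Ik) where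
  toFun u := ⟨u.1 * x, by
    have h : Ik * u.1 = u.1 := u.2
    show Ik * (u.1 * x) = u.1 * x
    rw [← mul_assoc, h]⟩
  map_add' u v := by
    apply Subtype.ext
    show (u.1 + v.1) * x = u.1 * x + v.1 * x
    rw [add_mul]
  map_smul' c u := by
    apply Subtype.ext
    show (c • u.1) * x = c • (u.1 * x)
    rw [smul_mul_assoc]

/-- The `K`-linear dual `D(I_k L)`, a left `L`-module via `(x·φ)(u) = φ(u x)`. -/
abbrev DualMod (Ik : L) : Type _ := Module.Dual K ↥(cornerRight Ik)

/-- The left `L`-module structure on `D(I_k L)`: `(x·φ)(u) = φ(u x)`. -/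
noncomputable instance dualModule (Ik : L) : Module L (DualMod Ik) where
  smul x φ := φ ∘ₗ rmulCorner Ik x
  one_smul φ := LinearMap.ext fun u => by
    show φ (rmulCorner Ik 1 u) = φ u
    congr 1
    exact Subtype.ext (mul_one _)
  mul_smul x y φ := LinearMap.ext fun u => by
    show φ (rmulCorner Ik (x * y) u) = φ (rmulCorner Ik y (rmulCorner Ik x u))
    congr 1
    exact Subtype.ext (mul_assoc _ _ _).symm
  smul_zero x := rfl
  smul_add x φ ψ := rfl
  add_smul x y φ := LinearMap.ext fun u => by
    show φ (rmulCorner Ik (x + y) u) = φ (rmulCorner Ik x u) + φ (rmulCorner Ik y u)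
    rw [← map_add]
    congr 1
    exact Subtype.ext (by show u.1 * (x + y) = u.1 * x + u.1 * y; rw [mul_add])
  zero_smul φ := LinearMap.ext fun u => by
    show φ (rmulCorner Ik 0 u) = 0
    have h : rmulCorner Ik 0 u = 0 := Subtype.ext (mul_zero _)
    rw [h, map_zero]

/-- For each `k ∈ 𝒫`, the subspace `I₀·D(I_k L)` of the left `L`-module `D(I_k L)` is
contained in the `L`-submodule generated by `I_E·D(I_k L)`. -/
theorem stmt11 (hK : IsAlgClosed K) (hn : 1 ≤ n) (P : PosetOn n)
    (hL : (L : Set (Matrix (Fin n ⊕ Fin n) (Fin n ⊕ Fin n) K)) = LSet K P)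
    (k : Fin n) (Ik IE I0 : L)
    (hIk : (Ik : Matrix (Fin n ⊕ Fin n) (Fin n ⊕ Fin n) K)
      = fromBlocks (Matrix.single k k 1) 0 0 0)
    (hIE : (IE : Matrix (Fin n ⊕ Fin n) (Fin n ⊕ Fin n) K) = fromBlocks 1 0 0 0)
    (hI0 : (I0 : Matrix (Fin n ⊕ Fin n) (Fin n ⊕ Fin n) K) = fromBlocks 0 0 0 1) :
    {χ : DualMod Ik | ∃ ψ : DualMod Ik, χ = I0 • ψ} ⊆
      (Submodule.span K
        {χ : DualMod Ik | ∃ (x : L) (ψ : DualMod Ik), χ = x • (IE • ψ)} :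
          Submodule K (DualMod Ik)) := by
  intro χ hχ
  obtain ⟨ψ, rfl⟩ := hχ
  -- x₀ = fromBlocks 0 0 1 0 belongs to L
  have hx0mem : (fromBlocks 0 0 1 0 : Matrix (Fin n ⊕ Fin n) (Fin n ⊕ Fin n) K) ∈ L := by
    show _ ∈ (L : Set (Matrix (Fin n ⊕ Fin n) (Fin n ⊕ Fin n) K))
    rw [hL]
    refine ⟨?_, ⟨?_, ?_⟩, ?_, ?_⟩
    · have h : (fromBlocks 0 0 1 0 : Matrix (Fin n ⊕ Fin n) (Fin n ⊕ Fin n) K).toBlocks₁₁ = 0 := by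
        simp
      rw [h]; exact zero_mem_KP P
    · have h : (fromBlocks 0 0 1 0 : Matrix (Fin n ⊕ Fin n) (Fin n ⊕ Fin n) K).toBlocks₁₂ = 0 := by
        simp
      rw [h]; exact zero_mem_KP P
    · have h : (fromBlocks 0 0 1 0 : Matrix (Fin n ⊕ Fin n) (Fin n ⊕ Fin n) K).toBlocks₁₂ = 0 := by
        simp
      rw [h]
      funext i
      simp [Matrix.mulVec]
    · have h : (fromBlocks 0 0 1 0 : Matrix (Fin n ⊕ Fin n) (Fin n ⊕ Fin n) K).toBlocks₂₁ = 1 := by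
        simp
      rw [h]; exact one_mem_KP P
    · have h : (fromBlocks 0 0 1 0 : Matrix (Fin n ⊕ Fin n) (Fin n ⊕ Fin n) K).toBlocks₂₂ = 0 := by
        simp
      rw [h]; exact zero_mem_KPone P
  set x₀ : L := ⟨fromBlocks 0 0 1 0, hx0mem⟩ with hx₀
  -- every element of the corner satisfies the matrix-level corner identity
  have hcornerM : ∀ u : ↥(cornerRight Ik),
      fromBlocks (Matrix.single k k (1:K)) 0 0 0 *
          ((u.1 : Matrix (Fin n ⊕ Fin n) (Fin n ⊕ Fin n) K))
        = (u.1 : Matrix (Fin n ⊕ Fin n) (Fin n ⊕ Fin n) K) := by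
    intro u
    have h := congrArg (Subtype.val) u.2
    have h' : (Ik : Matrix (Fin n ⊕ Fin n) (Fin n ⊕ Fin n) K) * (u.1 : Matrix _ _ K)
        = (u.1 : Matrix (Fin n ⊕ Fin n) (Fin n ⊕ Fin n) K) := h
    rwa [hIk] at h'
  have hmemM : ∀ u : ↥(cornerRight Ik),
      ((u.1 : Matrix (Fin n ⊕ Fin n) (Fin n ⊕ Fin n) K)) ∈ LSet K P := by
    intro u
    have h : (u.1 : Matrix (Fin n ⊕ Fin n) (Fin n ⊕ Fin n) K) ∈
        (L : Set (Matrix (Fin n ⊕ Fin n) (Fin n ⊕ Fin n) K)) := u.1.2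
    rwa [hL] at h
  -- the auxiliary linear endomorphism σ of the corner
  have hSmem : ∀ u : ↥(cornerRight Ik),
      Smap ((u.1 : Matrix (Fin n ⊕ Fin n) (Fin n ⊕ Fin n) K)) ∈ L := by
    intro u
    show _ ∈ (L : Set (Matrix (Fin n ⊕ Fin n) (Fin n ⊕ Fin n) K))
    rw [hL]
    exact Smap_mem_LSet P (hmemM u)
  have hScorner : ∀ u : ↥(cornerRight Ik),
      Ik * (⟨Smap ((u.1 : Matrix (Fin n ⊕ Fin n) (Fin n ⊕ Fin n) K)), hSmem u⟩ : L)
        = ⟨Smap ((u.1 : Matrix (Fin n ⊕ Fin n) (Fin n ⊕ Fin n) K)), hSmem u⟩ := by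
    intro u
    apply Subtype.ext
    show (Ik : Matrix (Fin n ⊕ Fin n) (Fin n ⊕ Fin n) K) * Smap _ = Smap _
    rw [hIk]
    exact Ik_mul_Smap k (hcornerM u)
  let σ : ↥(cornerRight Ik) →ₗ[K] ↥(cornerRight Ik) :=
    { toFun := fun u => ⟨⟨Smap ((u.1 : Matrix (Fin n ⊕ Fin n) (Fin n ⊕ Fin n) K)), hSmem u⟩,
        hScorner u⟩
      map_add' := fun u v => by
        apply Subtype.ext
        apply Subtype.ext
        show Smap ((((u + v).1 : L) : Matrix (Fin n ⊕ Fin n) (Fin n ⊕ Fin n) K))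
          = Smap ((u.1 : Matrix _ _ K)) + Smap ((v.1 : Matrix _ _ K))
        have h : (((u + v).1 : L) : Matrix (Fin n ⊕ Fin n) (Fin n ⊕ Fin n) K)
            = (u.1 : Matrix (Fin n ⊕ Fin n) (Fin n ⊕ Fin n) K)
              + (v.1 : Matrix (Fin n ⊕ Fin n) (Fin n ⊕ Fin n) K) := rfl
        rw [h, Smap_add]
      map_smul' := fun c u => by
        apply Subtype.ext
        apply Subtype.ext
        show Smap ((((c • u).1 : L) : Matrix (Fin n ⊕ Fin n) (Fin n ⊕ Fin n) K))
          = c • Smap ((u.1 : Matrix _ _ K))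
        have h : (((c • u).1 : L) : Matrix (Fin n ⊕ Fin n) (Fin n ⊕ Fin n) K)
            = c • (u.1 : Matrix (Fin n ⊕ Fin n) (Fin n ⊕ Fin n) K) := rfl
        rw [h, Smap_smul] }
  let φ : DualMod Ik := ψ ∘ₗ σ
  have hfinal : I0 • ψ = x₀ • (IE • φ) := by
    apply LinearMap.ext
    intro u
    show ψ (rmulCorner Ik I0 u) = φ (rmulCorner Ik IE (rmulCorner Ik x₀ u))
    show ψ (rmulCorner Ik I0 u) = ψ (σ (rmulCorner Ik IE (rmulCorner Ik x₀ u)))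
    congr 1
    apply Subtype.ext
    apply Subtype.ext
    show (u.1 : Matrix (Fin n ⊕ Fin n) (Fin n ⊕ Fin n) K)
        * (I0 : Matrix (Fin n ⊕ Fin n) (Fin n ⊕ Fin n) K)
      = Smap ((u.1 : Matrix (Fin n ⊕ Fin n) (Fin n ⊕ Fin n) K)
        * (x₀ : Matrix (Fin n ⊕ Fin n) (Fin n ⊕ Fin n) K)
        * (IE : Matrix (Fin n ⊕ Fin n) (Fin n ⊕ Fin n) K))
    have hx : (x₀ : Matrix (Fin n ⊕ Fin n) (Fin n ⊕ Fin n) K) = fromBlocks 0 0 1 0 := rfl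
    rw [hI0, hIE, hx]
    exact key_eq k (hcornerM u) (hmemM u).2.1.2
  rw [hfinal]
  exact Submodule.subset_span ⟨x₀, φ, rfl⟩
end
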